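/- (Conjugation identity for the $q$-difference operator.) Let $0<q<1$, $a,b \in \mathbb{C}\setminus\{0\}$. Define $\mathcal{L}^{(a,b)} f(x) = \frac{a}{2}(1+\frac{1}{x}) f(qx) - (\frac{a}{2x}+\frac{q}{2bx}) f(x) + \frac{1}{2a}(1+\frac{aq}{bx}) f(x/q)$, and the operator $(S(a,b) f)(x) = \frac{(-x;q)_\infty}{(-bx/a;q)_\infty}\, f(bx/a)$. Then $S(a,b)^{-1} \circ \mathcal{L}^{(a,b)} \circ S(a,b) = \mathcal{L}^{(b,a)}$ as operators on functions on a $q$-grid $yq^{\mathbb{Z}}$, $y>0$, provided $(-bx/a;q)_\infty \neq 0$ on the grid. -/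

import Mathlib

/-- Infinite q-shifted factorial `(c;q)_∞`. -/
noncomputable def qPinf (q : ℝ) (c : ℂ) : ℂ := ∏' i : ℕ, (1 - c * (q : ℂ) ^ i)

/-- The q-difference operator `𝓛^{(a,b)}`. -/
noncomputable def Lcal (q : ℝ) (a b : ℂ) (f : ℂ → ℂ) (x : ℂ) : ℂ :=
  a / 2 * (1 + 1 / x) * f ((q : ℂ) * x) -
    (a / (2 * x) + (q : ℂ) / (2 * b * x)) * f x +
    1 / (2 * a) * (1 + a * (q : ℂ) / (b * x)) * f (x / (q : ℂ))

/-- The operator `S(a,b) f(x) = ((-x;q)_∞ / (-bx/a;q)_∞) f(bx/a)`. -/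
noncomputable def Sop (q : ℝ) (a b : ℂ) (f : ℂ → ℂ) (x : ℂ) : ℂ :=
  qPinf q (-x) / qPinf q (-(b * x / a)) * f (b * x / a)

open Filter

lemma multipliable_qfactor (q : ℝ) (hq0 : 0 < q) (hq1 : q < 1) (c : ℂ) :
    Multipliable (fun i : ℕ => 1 - c * (q : ℂ) ^ i) := by
  by_cases hz : ∃ i : ℕ, 1 - c * (q : ℂ) ^ i = 0
  · obtain ⟨i0, hi0⟩ := hz
    refine ⟨0, ?_⟩
    rw [HasProd]
    refine tendsto_const_nhds.congr' ?_
    refine eventually_atTop.2 ⟨{i0}, fun s hs => ?_⟩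
    exact (Finset.prod_eq_zero (hs (Finset.mem_singleton_self i0)) hi0).symm
  · push_neg at hz
    refine Complex.multipliable_of_summable_log (f := fun i => 1 - c * (q : ℂ) ^ i) ?_
    have hqn : ‖(q : ℂ)‖ = q := by
      rw [Complex.norm_real, Real.norm_eq_abs, abs_of_pos hq0]
    have htend : Tendsto (fun n : ℕ => ‖c * (q : ℂ) ^ n‖) atTop (nhds 0) := by
      simp only [norm_mul, norm_pow, hqn]
      rw [show (0:ℝ) = ‖c‖ * 0 by ring]
      exact (tendsto_pow_atTop_nhds_zero_of_lt_one hq0.le hq1).const_mul _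
    have hev : ∀ᶠ n : ℕ in atTop, ‖c * (q : ℂ) ^ n‖ ≤ 1 / 2 := by
      filter_upwards [htend.eventually (gt_mem_nhds (by norm_num : (0:ℝ) < 1/2))] with n hn
      exact hn.le
    have hsum : Summable (fun n : ℕ => (3 / 2 : ℝ) * ‖c‖ * q ^ n) := by
      have := (summable_geometric_of_lt_one hq0.le hq1).mul_left (3 / 2 * ‖c‖)
      simpa [mul_assoc] using this
    refine Summable.of_norm_bounded_eventually_nat hsum ?_
    filter_upwards [hev] with n hn
    have h1 : ‖-(c * (q : ℂ) ^ n)‖ ≤ 1 / 2 := by rwa [norm_neg]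
    calc ‖Complex.log (1 - c * (q : ℂ) ^ n)‖
        = ‖Complex.log (1 + -(c * (q : ℂ) ^ n))‖ := by rw [sub_eq_add_neg]
      _ ≤ 3 / 2 * ‖-(c * (q : ℂ) ^ n)‖ := Complex.norm_log_one_add_half_le_self h1
      _ = 3 / 2 * ‖c‖ * q ^ n := by
          rw [norm_neg, norm_mul, norm_pow, hqn]; ring

set_option maxHeartbeats 1000000 in
lemma qPinf_shift (q : ℝ) (hq0 : 0 < q) (hq1 : q < 1) (c : ℂ) :
    qPinf q c = (1 - c) * qPinf q (c * (q : ℂ)) := by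
  have hm : Multipliable (fun b : ℕ => 1 - c * (q : ℂ) ^ (b + 1)) :=
    (multipliable_qfactor q hq0 hq1 (c * (q : ℂ))).congr fun b => by rw [pow_succ]; ring
  unfold qPinf
  rw [tprod_eq_zero_mul' hm]
  simp only [pow_zero, mul_one]
  congr 1
  exact tprod_congr fun b => by rw [pow_succ]; ring


set_option maxHeartbeats 1000000 in
lemma alg_conj (aa bb qq x P1 P2 F1 F2 F3 : ℂ) (ha : aa ≠ 0) (hb : bb ≠ 0) (hq : qq ≠ 0)
    (hx : x ≠ 0) (h1x : 1 + x ≠ 0) (h1u : bb + aa * x ≠ 0) (h1xq : qq + x ≠ 0)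
    (h1uq : bb * qq + aa * x ≠ 0) (nP1 : P1 ≠ 0) (nP2 : P2 ≠ 0) :
    (1 + x) * P1 / ((bb + aa * x) / bb * P2) *
      (aa / 2 * (1 + 1 / (aa * x / bb)) * (P2 / P1 * F1) -
        (aa / (2 * (aa * x / bb)) + qq / (2 * bb * (aa * x / bb))) *
          ((bb + aa * x) / bb * P2 / ((1 + x) * P1) * F2) +
        1 / (2 * aa) * (1 + aa * qq / (bb * (aa * x / bb))) *
          ((bb * qq + aa * x) / (bb * qq) * ((bb + aa * x) / bb * P2) /
            ((qq + x) / qq * ((1 + x) * P1)) * F3)) =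
      bb / 2 * (1 + 1 / x) * F1 - (bb / (2 * x) + qq / (2 * aa * x)) * F2 +
        1 / (2 * bb) * (1 + bb * qq / (aa * x)) * F3 := by
  have hB : (bb + aa * x) / bb * P2 ≠ 0 := mul_ne_zero (div_ne_zero h1u hb) nP2
  have hA : (1 + x) * P1 ≠ 0 := mul_ne_zero h1x nP1
  have hE : (qq + x) / qq * ((1 + x) * P1) ≠ 0 := mul_ne_zero (div_ne_zero h1xq hq) hA
  have g1 : (1 + x) * P1 / ((bb + aa * x) / bb * P2) * (P2 / P1) =
      (1 + x) * bb / (bb + aa * x) := by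
    rw [div_mul_div_comm, div_eq_div_iff (mul_ne_zero hB nP1) h1u]
    field_simp
  have g2 : (1 + x) * P1 / ((bb + aa * x) / bb * P2) *
      ((bb + aa * x) / bb * P2 / ((1 + x) * P1)) = 1 := by
    rw [div_mul_div_comm, div_eq_one_iff_eq (mul_ne_zero hB hA)]
    ring
  have g3 : (1 + x) * P1 / ((bb + aa * x) / bb * P2) *
      ((bb * qq + aa * x) / (bb * qq) * ((bb + aa * x) / bb * P2) /
        ((qq + x) / qq * ((1 + x) * P1))) = (bb * qq + aa * x) / (bb * (qq + x)) := by
    rw [div_mul_div_comm, div_eq_div_iff (mul_ne_zero hB hE) (mul_ne_zero hb h1xq)]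
    field_simp
  have k1 : (1 + x) * bb / (bb + aa * x) * (aa / 2 * (1 + 1 / (aa * x / bb))) =
      bb / 2 * (1 + 1 / x) := by
    rw [div_mul_eq_mul_div, div_eq_iff h1u]
    field_simp
    ring
  have k2 : aa / (2 * (aa * x / bb)) + qq / (2 * bb * (aa * x / bb)) =
      bb / (2 * x) + qq / (2 * aa * x) := by
    field_simp
  have k3 : (bb * qq + aa * x) / (bb * (qq + x)) *
      (1 / (2 * aa) * (1 + aa * qq / (bb * (aa * x / bb)))) =
      1 / (2 * bb) * (1 + bb * qq / (aa * x)) := by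
    rw [div_mul_eq_mul_div, div_eq_iff (mul_ne_zero hb h1xq)]
    field_simp
    ring
  linear_combination (F1 * (aa / 2 * (1 + 1 / (aa * x / bb)))) * g1 + F1 * k1 -
    (F2 * (aa / (2 * (aa * x / bb)) + qq / (2 * bb * (aa * x / bb)))) * g2 - F2 * k2 +
    (F3 * (1 / (2 * aa) * (1 + aa * qq / (bb * (aa * x / bb))))) * g3 + F3 * k3

set_option maxHeartbeats 2000000 in
/-- Conjugation identity `S(a,b)⁻¹ ∘ 𝓛^{(a,b)} ∘ S(a,b) = 𝓛^{(b,a)}` on a q-grid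
`y qᶻ`, with `S(a,b)⁻¹ = S(b,a)`, provided the relevant `(·;q)_∞` products do not
vanish on the grids. -/
theorem Lcal_conjugation (q : ℝ) (hq0 : 0 < q) (hq1 : q < 1)
    (a b : ℂ) (ha : a ≠ 0) (hb : b ≠ 0)
    (y : ℝ) (hy : 0 < y)
    (h1 : ∀ j : ℤ, qPinf q (-((y : ℂ) * (q : ℂ) ^ j)) ≠ 0)
    (h2 : ∀ j : ℤ, qPinf q (-(a * ((y : ℂ) * (q : ℂ) ^ j) / b)) ≠ 0)
    (f : ℂ → ℂ) (k : ℤ) :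
    Sop q b a (fun t => Lcal q a b (Sop q a b f) t) ((y : ℂ) * (q : ℂ) ^ k) =
      Lcal q b a f ((y : ℂ) * (q : ℂ) ^ k) := by
  have hQ : (q : ℂ) ≠ 0 := by exact_mod_cast hq0.ne'
  have hy0 : (y : ℂ) ≠ 0 := by exact_mod_cast hy.ne'
  set x : ℂ := (y : ℂ) * (q : ℂ) ^ k with hxd
  have hx : x ≠ 0 := mul_ne_zero hy0 (zpow_ne_zero _ hQ)
  have A1 : ∀ z : ℂ, qPinf q (-z) = (1 + z) * qPinf q (-((q : ℂ) * z)) := by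
    intro z
    have h := qPinf_shift q hq0 hq1 (-z)
    rw [show -z * (q : ℂ) = -((q : ℂ) * z) by ring] at h
    rw [h]; ring
  have A2 : ∀ z : ℂ, qPinf q (-(z / (q : ℂ))) = (1 + z / (q : ℂ)) * qPinf q (-z) := by
    intro z
    have h := A1 (z / (q : ℂ))
    rwa [show (q : ℂ) * (z / (q : ℂ)) = z by field_simp] at h
  have n1 : qPinf q (-x) ≠ 0 := by rw [hxd]; exact h1 k
  have nqx : qPinf q (-((q : ℂ) * x)) ≠ 0 := by
    have h := h1 (k + 1)
    rwa [show (y : ℂ) * (q : ℂ) ^ (k + 1) = (q : ℂ) * x by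
      rw [hxd, zpow_add_one₀ hQ]; ring] at h
  have nxq : qPinf q (-(x / (q : ℂ))) ≠ 0 := by
    have h := h1 (k - 1)
    rwa [show (y : ℂ) * (q : ℂ) ^ (k - 1) = x / (q : ℂ) by
      rw [hxd, zpow_sub_one₀ hQ]; ring] at h
  have nu : qPinf q (-(a * x / b)) ≠ 0 := by rw [hxd]; exact h2 k
  have nqu : qPinf q (-((q : ℂ) * (a * x / b))) ≠ 0 := by
    have h := h2 (k + 1)
    rwa [show a * ((y : ℂ) * (q : ℂ) ^ (k + 1)) / b = (q : ℂ) * (a * x / b) by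
      rw [hxd, zpow_add_one₀ hQ]; ring] at h
  have nuq : qPinf q (-(a * x / b / (q : ℂ))) ≠ 0 := by
    have h := h2 (k - 1)
    rwa [show a * ((y : ℂ) * (q : ℂ) ^ (k - 1)) / b = a * x / b / (q : ℂ) by
      rw [hxd, zpow_sub_one₀ hQ]; ring] at h
  have hP1 : qPinf q (-x) = (1 + x) * qPinf q (-((q : ℂ) * x)) := A1 x
  have hP2 : qPinf q (-(a * x / b)) = (1 + a * x / b) * qPinf q (-((q : ℂ) * (a * x / b))) :=
    A1 (a * x / b)
  have h1x : (1 : ℂ) + x ≠ 0 := by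
    intro h; apply n1; rw [hP1, h, zero_mul]
  have h1u : (1 : ℂ) + a * x / b ≠ 0 := by
    intro h; apply nu; rw [hP2, h, zero_mul]
  have h1xq : (1 : ℂ) + x / (q : ℂ) ≠ 0 := by
    intro h; apply nxq; rw [A2 x, h, zero_mul]
  have h1uq : (1 : ℂ) + a * x / b / (q : ℂ) ≠ 0 := by
    intro h; apply nuq; rw [A2 (a * x / b), h, zero_mul]
  field_simp [hb, hQ] at h1u h1uq h1xq
  clear_value x
  set P1 : ℂ := qPinf q (-((q : ℂ) * x)) with hP1d
  set P2 : ℂ := qPinf q (-((q : ℂ) * (a * x / b))) with hP2d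
  clear_value P1 P2
  have hP2' : qPinf q (-(a * x / b)) = (b + a * x) / b * P2 := by
    rw [hP2]; field_simp <;> ring
  have hXq : qPinf q (-(x / (q : ℂ))) = ((q : ℂ) + x) / (q : ℂ) * ((1 + x) * P1) := by
    rw [A2 x, hP1]; field_simp <;> ring
  have hUq : qPinf q (-(a * x / b / (q : ℂ))) =
      (b * (q : ℂ) + a * x) / (b * (q : ℂ)) * ((b + a * x) / b * P2) := by
    rw [A2 (a * x / b), hP2']; field_simp <;> ring
  simp only [Sop, Lcal]
  rw [show b * ((q : ℂ) * (a * x / b)) / a = (q : ℂ) * x by field_simp <;> ring,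
    show b * (a * x / b) / a = x by field_simp <;> ring,
    show b * (a * x / b / (q : ℂ)) / a = x / (q : ℂ) by field_simp <;> ring]
  rw [hXq, hUq, hP1, hP2', ← hP1d, ← hP2d]
  exact alg_conj a b (q : ℂ) x P1 P2 (f ((q : ℂ) * x)) (f x) (f (x / (q : ℂ)))
    ha hb hQ hx h1x (div_ne_zero_iff.mp h1u).1 (div_ne_zero_iff.mp h1xq).1
    (div_ne_zero_iff.mp h1uq).1 nqx nqu
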